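/- Let H be a complex Hilbert space and let T : H →L[ℂ] H be a bounded linear operator. Then T is a linear combination of four unitary operators: there exist complex scalars c₀, c₁, c₂, c₃ and unitary operators U₀, U₁, U₂, U₃ on H such that T = c₀ • U₀ + c₁ • U₁ + c₂ • U₂ + c₃ • U₃. -/

import Mathlib

open Complex in
lemma aux_selfadj_sum_unitary {A : Type*} [CStarAlgebra A] {a : A}
    (ha : IsSelfAdjoint a) (h1 : ‖a‖ ≤ 1) :
    ∃ u ∈ unitary A, a = (1/2 : ℂ) • (u + star u) := by
  have hna : IsStarNormal a := ha.isStarNormal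
  rcases subsingleton_or_nontrivial A with hs | hn
  · exact ⟨1, one_mem _, Subsingleton.elim _ _⟩
  set f : ℂ → ℂ := fun z => (z.re : ℂ) + Complex.I * Real.sqrt (1 - z.re ^ 2) with hf
  have hfc : Continuous f := by fun_prop
  have hgc : Continuous (fun z => star (f z)) := by fun_prop
  have hkey : ∀ z ∈ spectrum ℂ a, f z * star (f z) = 1 := by
    intro z hz
    have hre : z = z.re := ha.mem_spectrum_eq_re hz
    have hnorm : ‖z‖ ≤ 1 := (spectrum.norm_le_norm_of_mem hz).trans h1
    have h2 : z.re ^ 2 ≤ 1 := by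
      have h3 : |z.re| ≤ 1 := (Complex.abs_re_le_norm z).trans hnorm
      nlinarith [abs_nonneg z.re, _root_.sq_abs z.re]
    have hsq : ((Real.sqrt (1 - z.re ^ 2) : ℝ) : ℂ) ^ 2 = ((1 - z.re ^ 2 : ℝ) : ℂ) := by
      rw [← Complex.ofReal_pow, Real.sq_sqrt (by linarith)]
    have : f z * star (f z) = (z.re : ℂ) ^ 2
        - Complex.I ^ 2 * ((Real.sqrt (1 - z.re ^ 2) : ℝ) : ℂ) ^ 2 := by
      simp only [hf, star_add, star_mul', Complex.star_def, Complex.conj_I,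
        Complex.conj_ofReal]
      ring
    rw [this, Complex.I_sq, hsq]
    push_cast
    ring
  set u : A := cfc f a with hu
  have hstar : star u = cfc (fun z => star (f z)) a := (cfc_star f a).symm
  have hmul : u * star u = 1 := by
    rw [hu, hstar, ← cfc_mul f _ a]
    calc cfc (fun z => f z * star (f z)) a = cfc (fun _ : ℂ => (1 : ℂ)) a :=
          cfc_congr hkey
      _ = 1 := cfc_one ℂ a
  have hmul' : star u * u = 1 := by
    rw [hu, hstar, ← cfc_mul _ f a]
    calc cfc (fun z => star (f z) * f z) a = cfc (fun _ : ℂ => (1 : ℂ)) a :=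
          cfc_congr (fun z hz => by rw [mul_comm]; exact hkey z hz)
      _ = 1 := cfc_one ℂ a
  refine ⟨u, ⟨hmul', hmul⟩, ?_⟩
  have hsum : u + star u = (2 : ℂ) • a := by
    rw [hu, hstar, ← cfc_add a f (fun z => star (f z)) hfc.continuousOn hgc.continuousOn]
    have : cfc (fun z => f z + star (f z)) a = cfc (fun z : ℂ => (2 : ℂ) • z) a := by
      refine cfc_congr fun z hz => ?_
      have hre : z = z.re := ha.mem_spectrum_eq_re hz
      have h2re : f z + star (f z) = 2 * (z.re : ℂ) := by
        simp only [hf, star_add, star_mul', Complex.star_def, Complex.conj_I,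
          Complex.conj_ofReal]
        ring
      rw [h2re, smul_eq_mul, ← hre]
    rw [this, cfc_smul (2 : ℂ) (fun z : ℂ => z) a, cfc_id' ℂ a]
  rw [hsum, smul_smul]
  norm_num
theorem bounded_op_linear_combination_of_four_unitaries
    {H : Type*} [NormedAddCommGroup H] [InnerProductSpace ℂ H] [CompleteSpace H]
    (T : H →L[ℂ] H) :
    ∃ (c₀ c₁ c₂ c₃ : ℂ) (U₀ U₁ U₂ U₃ : H →L[ℂ] H),
      U₀ ∈ unitary (H →L[ℂ] H) ∧ U₁ ∈ unitary (H →L[ℂ] H) ∧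
      U₂ ∈ unitary (H →L[ℂ] H) ∧ U₃ ∈ unitary (H →L[ℂ] H) ∧
      T = c₀ • U₀ + c₁ • U₁ + c₂ • U₂ + c₃ • U₃ := by
  obtain ⟨r, hr, hTle⟩ : ∃ r : ℝ, 0 < r ∧ ‖T‖ ≤ r := ⟨‖T‖ + 1, by positivity, by linarith⟩
  have hrC : ((r : ℝ) : ℂ) ≠ 0 := Complex.ofReal_ne_zero.mpr hr.ne'
  have hr' : ((2 * r : ℝ) : ℂ) ≠ 0 := by
    norm_cast
    positivity
  set c : ℂ := (((2 * r)⁻¹ : ℝ) : ℂ) with hc_def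
  have hcstar : star c = c := by rw [hc_def, Complex.star_def, Complex.conj_ofReal]
  set a : H →L[ℂ] H := c • (T + star T) with ha_def
  set b : H →L[ℂ] H := c • (Complex.I • (star T - T)) with hb_def
  have haSA : IsSelfAdjoint a := by
    rw [ha_def]
    refine IsSelfAdjoint.smul hcstar ?_
    simp [IsSelfAdjoint, star_add, add_comm]
  have hbSA : IsSelfAdjoint b := by
    rw [hb_def]
    refine IsSelfAdjoint.smul hcstar ?_
    simp only [IsSelfAdjoint, star_smul, star_sub, star_star, Complex.star_def,
      Complex.conj_I, neg_smul, smul_sub]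
    module
  have hcval : ‖c‖ = (2 * r)⁻¹ := by
    rw [hc_def, Complex.norm_real, Real.norm_eq_abs, abs_of_pos (by positivity)]
  have hna : ‖a‖ ≤ 1 := by
    rw [ha_def]
    calc ‖c • (T + star T)‖ = (2 * r)⁻¹ * ‖T + star T‖ := by rw [norm_smul, hcval]
      _ ≤ (2 * r)⁻¹ * (‖T‖ + ‖T‖) := by
          gcongr
          exact (norm_add_le _ _).trans (by rw [norm_star])
      _ ≤ 1 := by
          rw [inv_mul_le_iff₀ (by positivity)]
          linarith
  have hnb : ‖b‖ ≤ 1 := by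
    rw [hb_def]
    calc ‖c • (Complex.I • (star T - T))‖ = (2 * r)⁻¹ * ‖Complex.I • (star T - T)‖ := by
          rw [norm_smul, hcval]
      _ ≤ (2 * r)⁻¹ * (‖T‖ + ‖T‖) := by
          gcongr
          rw [norm_smul, Complex.norm_I, one_mul]
          exact (norm_sub_le _ _).trans (by rw [norm_star])
      _ ≤ 1 := by
          rw [inv_mul_le_iff₀ (by positivity)]
          linarith
  obtain ⟨u, hu, hau⟩ := aux_selfadj_sum_unitary haSA hna
  obtain ⟨v, hv, hbv⟩ := aux_selfadj_sum_unitary hbSA hnb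
  have key : T = ((r : ℝ) : ℂ) • a + (((r : ℝ) : ℂ) * Complex.I) • b := by
    rw [ha_def, hb_def, hc_def]
    have h1 : ((r : ℝ) : ℂ) * (((2 * r)⁻¹ : ℝ) : ℂ) = 1 / 2 := by
      push_cast
      field_simp
    have h2 : ((r : ℝ) : ℂ) * Complex.I * (((2 * r)⁻¹ : ℝ) : ℂ) * Complex.I = -(1 / 2) := by
      calc ((r : ℝ) : ℂ) * Complex.I * (((2 * r)⁻¹ : ℝ) : ℂ) * Complex.I
          = (((r : ℝ) : ℂ) * (((2 * r)⁻¹ : ℝ) : ℂ)) * (Complex.I * Complex.I) := by ring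
        _ = -(1 / 2) := by rw [h1, Complex.I_mul_I]; ring
    rw [smul_smul, smul_smul, smul_smul, h1, h2]
    module
  refine ⟨((r : ℝ) : ℂ) / 2, ((r : ℝ) : ℂ) / 2,
    ((r : ℝ) : ℂ) * Complex.I / 2, ((r : ℝ) : ℂ) * Complex.I / 2,
    u, star u, v, star v, hu, Unitary.star_mem hu, hv, Unitary.star_mem hv, ?_⟩
  rw [key, hau, hbv]
  module
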